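/- For b ≥ 0, the polynomial f(n) = binom(n+3,3) + b*binom(n+2,3) + b*binom(n+1,3) + binom(n,3) satisfies 6·f(n) = (2n+1)((b+1)n² + (b+1)n + 6), and its roots are -1/2 and -1/2 ± (1/2)√((b−23)/(b+1)). In particular, all roots α satisfy -1 < Re(α) < 0 or Re(α) = -1/2 with |Im(α)| ≤ √23/2. -/

import Mathlib

/-- Polynomial binomial coefficient `binom(x, k) = x(x-1)⋯(x-k+1)/k!` in a complex variable. -/
noncomputable def cbinom (x : ℂ) (k : ℕ) : ℂ :=
  (∏ j ∈ Finset.range k, (x - (j : ℂ))) / (k.factorial : ℂ)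

theorem stmt6 (b : ℝ) (hb : 0 ≤ b) :
    (∀ n : ℂ,
        6 * (cbinom (n + 3) 3 + (b : ℂ) * cbinom (n + 2) 3 + (b : ℂ) * cbinom (n + 1) 3 +
            cbinom n 3) =
          (2 * n + 1) * (((b : ℂ) + 1) * n ^ 2 + ((b : ℂ) + 1) * n + 6)) ∧
      (∀ α : ℂ,
        cbinom (α + 3) 3 + (b : ℂ) * cbinom (α + 2) 3 + (b : ℂ) * cbinom (α + 1) 3 +
            cbinom α 3 = 0 ↔
          α = -(1 / 2) ∨
            α = -(1 / 2) + (1 / 2) * (((b - 23) / (b + 1) : ℝ) : ℂ) ^ ((1 : ℂ) / 2) ∨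
              α = -(1 / 2) - (1 / 2) * (((b - 23) / (b + 1) : ℝ) : ℂ) ^ ((1 : ℂ) / 2)) ∧
        (∀ α : ℂ,
          cbinom (α + 3) 3 + (b : ℂ) * cbinom (α + 2) 3 + (b : ℂ) * cbinom (α + 1) 3 +
              cbinom α 3 = 0 →
            (-1 < α.re ∧ α.re < 0) ∨
              (α.re = -(1 / 2) ∧ |α.im| ≤ Real.sqrt 23 / 2)) := by
  have hb1R : (0:ℝ) < b + 1 := by linarith
  have hb1 : ((b:ℂ) + 1) ≠ 0 := by
    intro h
    have : (b:ℝ) + 1 = 0 := by exact_mod_cast h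
    linarith
  set s : ℂ := (((b - 23) / (b + 1) : ℝ) : ℂ) ^ ((1 : ℂ) / 2) with hsdef
  have hs2 : s ^ 2 = (((b - 23) / (b + 1) : ℝ) : ℂ) := by
    have : ((1:ℂ)/2) = (((2:ℕ):ℂ))⁻¹ := by norm_num
    rw [hsdef, this]
    exact Complex.cpow_nat_inv_pow _ (by norm_num)
  have key : ∀ n : ℂ,
      6 * (cbinom (n + 3) 3 + (b : ℂ) * cbinom (n + 2) 3 + (b : ℂ) * cbinom (n + 1) 3 +
          cbinom n 3) =
        (2 * n + 1) * (((b : ℂ) + 1) * n ^ 2 + ((b : ℂ) + 1) * n + 6) := by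
    intro n
    simp only [cbinom, Finset.prod_range_succ, Finset.prod_range_zero, Nat.factorial]
    push_cast
    ring
  have h1 : ((b:ℂ)+1) * s^2 = (b:ℂ) - 23 := by
    rw [hs2]; push_cast; field_simp
  have hroot : ∀ α : ℂ,
      (cbinom (α + 3) 3 + (b : ℂ) * cbinom (α + 2) 3 + (b : ℂ) * cbinom (α + 1) 3 +
          cbinom α 3 = 0 ↔
        α = -(1 / 2) ∨ α = -(1 / 2) + (1 / 2) * s ∨ α = -(1 / 2) - (1 / 2) * s) := by
    intro α
    have h6 : (cbinom (α + 3) 3 + (b : ℂ) * cbinom (α + 2) 3 + (b : ℂ) * cbinom (α + 1) 3 +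
        cbinom α 3 = 0) ↔ (2 * α + 1) * (((b : ℂ) + 1) * α ^ 2 + ((b : ℂ) + 1) * α + 6) = 0 := by
      rw [← key α]
      constructor
      · intro h; rw [h, mul_zero]
      · intro h
        have := mul_eq_zero.mp h
        rcases this with h' | h'
        · norm_num at h'
        · exact h'
    rw [h6]
    have hQ : ((b : ℂ) + 1) * α ^ 2 + ((b : ℂ) + 1) * α + 6
        = ((b:ℂ)+1) * (α - (-(1/2) + (1/2)*s)) * (α - (-(1/2) - (1/2)*s)) := by
      linear_combination ((1:ℂ)/4) * h1
    have h3 : ((2*α+1 : ℂ) = 0) ↔ α = -(1/2) := by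
      constructor
      · intro h; linear_combination h / 2
      · intro h; rw [h]; ring
    rw [hQ, mul_eq_zero, mul_eq_zero, mul_eq_zero, h3, sub_eq_zero, sub_eq_zero]
    simp only [hb1, false_or]
  refine ⟨key, hroot, ?_⟩
  intro α hα
  have hre : (s^2).re = (b - 23) / (b + 1) := by rw [hs2]; exact Complex.ofReal_re _
  have him : (s^2).im = 0 := by rw [hs2]; exact Complex.ofReal_im _
  have hre' : s.re^2 - s.im^2 = (b - 23) / (b + 1) := by
    rw [← hre]; rw [pow_two, pow_two, pow_two]; simp [Complex.mul_re]
  have him' : 2 * s.re * s.im = 0 := by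
    rw [← him] at *; rw [pow_two]; simp [Complex.mul_im]; ring
  rcases (hroot α).mp hα with h | h | h
  · left
    rw [h]
    norm_num
  all_goals {
    by_cases hcase : s.im = 0
    · -- s real
      left
      have ht : s.re^2 = (b-23)/(b+1) := by rw [← hre']; rw [hcase]; ring
      have htlt : (b-23)/(b+1) < 1 := by
        rw [div_lt_one hb1R]; linarith
      have : s.re^2 < 1 := by rw [ht]; exact htlt
      have habs : -1 < s.re ∧ s.re < 1 := by constructor <;> nlinarith [sq_nonneg (s.re - 1), sq_nonneg (s.re + 1)]
      rw [h]
      constructor <;> simp [Complex.add_re, Complex.sub_re, Complex.mul_re] <;> nlinarith [habs.1, habs.2]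
    · -- s purely imaginary
      right
      have hre0 : s.re = 0 := by
        rcases mul_eq_zero.mp him' with h' | h'
        · rcases mul_eq_zero.mp h' with h'' | h''
          · norm_num at h''
          · exact h''
        · exact absurd h' hcase
      have himsq : s.im^2 = (23 - b)/(b+1) := by
        have h' := hre'; rw [hre0] at h'
        have hne : (b:ℝ) + 1 ≠ 0 := ne_of_gt hb1R
        field_simp at h' ⊢
        linarith
      have hle : s.im^2 ≤ 23 := by
        rw [himsq, div_le_iff₀ hb1R]; nlinarith
      have habs : |s.im| ≤ Real.sqrt 23 := by
        rw [← Real.sqrt_sq_eq_abs]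
        exact Real.sqrt_le_sqrt hle
      rw [h]
      constructor
      · simp [Complex.add_re, Complex.sub_re, Complex.mul_re, hre0]
      · have him2 : ((-(1/2) + (1/2)*s : ℂ)).im = s.im / 2 := by
          simp [Complex.add_im, Complex.mul_im]
          ring
        have him3 : ((-(1/2) - (1/2)*s : ℂ)).im = -(s.im / 2) := by
          simp [Complex.sub_im, Complex.mul_im]
          ring
        first
        | (rw [him2]; rw [abs_div]; rw [abs_of_nonneg (by norm_num : (0:ℝ) ≤ 2)]; linarith)
        | (rw [him3, abs_neg]; rw [abs_div]; rw [abs_of_nonneg (by norm_num : (0:ℝ) ≤ 2)]; linarith)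
  }
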